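/- Let n be a positive even natural number. If σ is chosen uniformly at random among the permutations of Fin n and each player i uses the pointer-following strategy with n/2 openings, then the probability that all n players win equals 1 − ∑_{k=1}^{n/2} 1/(n/2 + k). -/

import Mathlib

set_option linter.unusedSectionVars false
set_option maxHeartbeats 1000000
open Equiv Function Finset

namespace Locker

variable {α : Type*} [Fintype α] [DecidableEq α]

lemma minP_pos (σ : Perm α) (x : α) : 0 < minimalPeriod σ x := by
  have h : (⇑σ)^[orderOf σ] x = x := by
    rw [Equiv.Perm.iterate_eq_pow, pow_orderOf_eq_one]; rfl
  exact minimalPeriod_pos_of_mem_periodicPts ⟨orderOf σ, orderOf_pos σ, h⟩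

lemma pow_eq_self_iff (σ : Perm α) (x : α) (k : ℕ) :
    (σ ^ k) x = x ↔ minimalPeriod σ x ∣ k := by
  rw [← isPeriodicPt_iff_minimalPeriod_dvd, IsPeriodicPt, IsFixedPt,
    Equiv.Perm.iterate_eq_pow]

lemma pow_minP (σ : Perm α) (x : α) : (σ ^ minimalPeriod σ x) x = x :=
  (pow_eq_self_iff σ x _).mpr dvd_rfl

lemma minP_apply_pow (σ : Perm α) (x : α) (k : ℕ) :
    minimalPeriod σ ((σ ^ k) x) = minimalPeriod σ x := by
  rw [← Equiv.Perm.iterate_eq_pow]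
  exact minimalPeriod_apply_iterate
    (minimalPeriod_pos_iff_mem_periodicPts.mp (minP_pos σ x)) k

/-- The orbit of `x` under `σ` as a `Finset`. -/
noncomputable def orb (σ : Perm α) (x : α) : Finset α :=
  (Finset.range (minimalPeriod σ x)).image fun k => (σ ^ k) x

lemma card_orb (σ : Perm α) (x : α) : (orb σ x).card = minimalPeriod σ x := by
  rw [orb, Finset.card_image_of_injOn, Finset.card_range]
  intro a ha b hb hab
  simp only [Finset.coe_range, Set.mem_Iio] at ha hb
  have := iterate_injOn_Iio_minimalPeriod (f := ⇑σ) (x := x)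
  exact this ha hb (by simpa [Equiv.Perm.iterate_eq_pow] using hab)

lemma mem_orb_self (σ : Perm α) (x : α) : x ∈ orb σ x := by
  refine Finset.mem_image.mpr ⟨0, ?_, by simp⟩
  simp [minP_pos σ x]

lemma mem_orb_iff {σ : Perm α} {x y : α} :
    y ∈ orb σ x ↔ ∃ k : ℕ, (σ ^ k) x = y := by
  constructor
  · rintro h
    rcases Finset.mem_image.mp h with ⟨k, -, hk⟩
    exact ⟨k, hk⟩
  · rintro ⟨k, rfl⟩
    refine Finset.mem_image.mpr ⟨k % minimalPeriod σ x,
      Finset.mem_range.mpr (Nat.mod_lt _ (minP_pos σ x)), ?_⟩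
    have hx : ∀ d, ((σ ^ minimalPeriod σ x) ^ d) x = x := by
      intro d
      induction d with
      | zero => simp
      | succ d ihd => rw [pow_succ, Equiv.Perm.mul_apply, pow_minP, ihd]
    conv_rhs => rw [← Nat.mod_add_div k (minimalPeriod σ x)]
    rw [pow_add, Equiv.Perm.mul_apply, pow_mul, hx]

lemma minP_eq_of_mem_orb {σ : Perm α} {x y : α} (h : y ∈ orb σ x) :
    minimalPeriod σ y = minimalPeriod σ x := by
  rcases mem_orb_iff.mp h with ⟨k, rfl⟩
  exact minP_apply_pow σ x k

lemma orb_eq_of_mem {σ : Perm α} {x y : α} (h : y ∈ orb σ x) :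
    orb σ y = orb σ x := by
  rcases mem_orb_iff.mp h with ⟨k, rfl⟩
  apply Finset.eq_of_subset_of_card_le
  · intro z hz
    rcases mem_orb_iff.mp hz with ⟨j, rfl⟩
    exact mem_orb_iff.mpr ⟨j + k, by rw [pow_add, Equiv.Perm.mul_apply]⟩
  · rw [card_orb, card_orb, minP_apply_pow]

lemma orb_disjoint {σ : Perm α} {x y : α} (h : y ∉ orb σ x) :
    Disjoint (orb σ x) (orb σ y) := by
  rw [Finset.disjoint_left]
  intro z hzx hzy
  exact h (orb_eq_of_mem hzx ▸ (orb_eq_of_mem hzy ▸ mem_orb_self σ y))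

lemma minP_le_card (σ : Perm α) (x : α) :
    minimalPeriod σ x ≤ Fintype.card α := by
  rw [← card_orb]; exact Finset.card_le_univ _

/-- If the minimal period of `x` exceeds half the size, all points of the
same period lie in the orbit of `x`. -/
lemma mem_orb_of_half {σ : Perm α} {x y : α}
    (hm : Fintype.card α < 2 * minimalPeriod σ x)
    (hy : minimalPeriod σ y = minimalPeriod σ x) : y ∈ orb σ x := by
  by_contra h
  have hd := orb_disjoint h
  have := Finset.card_le_univ (orb σ x ∪ orb σ y)
  rw [Finset.card_union_of_disjoint hd, card_orb, card_orb, hy] at this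
  omega

lemma filter_minP_eq_orb {σ : Perm α} {x : α} {m : ℕ}
    (hx : minimalPeriod σ x = m) (hm : Fintype.card α < 2 * m) :
    (univ.filter fun y => minimalPeriod σ y = m) = orb σ x := by
  ext y
  simp only [Finset.mem_filter, Finset.mem_univ, true_and]
  constructor
  · intro hy
    exact mem_orb_of_half (by omega) (by omega)
  · intro hy
    rw [minP_eq_of_mem_orb hy, hx]



/-- Transport a filter-card along an equivalence. -/
lemma card_filter_equiv {β γ : Type*} [Fintype β] [Fintype γ]
    (E : β ≃ γ) (P : β → Prop) [DecidablePred P] :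
    (univ.filter P).card = (univ.filter fun c => P (E.symm c)).card := by
  apply Finset.card_bij (fun b _ => E b)
  · intro a ha
    simp only [Finset.mem_filter, Finset.mem_univ, true_and] at ha ⊢
    simpa using ha
  · intro a ha b hb h
    exact E.injective h
  · intro c hc
    simp only [Finset.mem_filter, Finset.mem_univ, true_and] at hc
    exact ⟨E.symm c, by simpa using hc, by simp⟩

lemma card_filter_prod {A B : Type*} [Fintype A] [Fintype B] [DecidableEq A]
    (Q : A × B → Prop) [DecidablePred Q] :
    (univ.filter Q).card = ∑ p : A, (univ.filter fun e : B => Q (p, e)).card := by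
  rw [Finset.card_eq_sum_card_fiberwise (f := Prod.fst) (t := univ)
    (fun x _ => Finset.mem_univ _)]
  refine Finset.sum_congr rfl fun p _ => ?_
  apply Finset.card_bij (fun pe _ => pe.2)
  · intro a ha
    simp only [Finset.mem_filter, Finset.mem_univ, true_and] at ha ⊢
    rcases ha with ⟨hq, h1⟩
    rwa [← h1, Prod.mk.eta] at *
    
  · intro a ha b hb h
    simp only [Finset.mem_filter] at ha hb
    exact Prod.ext (ha.2.trans hb.2.symm) h
  · intro e he
    simp only [Finset.mem_filter, Finset.mem_univ, true_and] at he
    exact ⟨(p, e), by simp [he], rfl⟩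


variable {α : Type*} [Fintype α] [DecidableEq α]

lemma minP_conj (σ π : Perm α) (x : α) :
    minimalPeriod (π * σ * π⁻¹) (π x) = minimalPeriod σ x := by
  rw [minimalPeriod_eq_minimalPeriod_iff]
  intro k
  simp only [IsPeriodicPt, IsFixedPt, Equiv.Perm.iterate_eq_pow]
  rw [conj_pow]
  constructor
  · intro h
    have := congrArg π.symm h
    simpa using this
  · intro h
    simp [Equiv.Perm.mul_apply, h]

lemma card_minP_conj (x y : α) (m : ℕ) :
    (univ.filter fun σ : Perm α => minimalPeriod σ x = m).card
      = (univ.filter fun σ : Perm α => minimalPeriod σ y = m).card := by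
  set π := Equiv.swap x y with hπ
  apply Finset.card_bij (fun σ _ => π * σ * π⁻¹)
  · intro σ hσ
    simp only [Finset.mem_filter, Finset.mem_univ, true_and] at hσ ⊢
    rw [← hσ, ← minP_conj σ π x, hπ, Equiv.swap_apply_left]
  · intro a _ b _ h
    have := congrArg (fun τ => π⁻¹ * τ * π) h
    simpa [mul_assoc] using this
  · intro τ hτ
    simp only [Finset.mem_filter, Finset.mem_univ, true_and] at hτ
    refine ⟨π⁻¹ * τ * π, ?_, by group⟩
    simp only [Finset.mem_filter, Finset.mem_univ, true_and]
    rw [← hτ]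
    have : minimalPeriod (π * (π⁻¹ * τ * π) * π⁻¹) (π x) =
        minimalPeriod (π⁻¹ * τ * π) x := minP_conj _ π x
    rw [show π * (π⁻¹ * τ * π) * π⁻¹ = τ by group, hπ, Equiv.swap_apply_left] at this
    rw [← hπ] at this
    rw [this]





lemma minP_decompose_zero (n : ℕ) (e : Perm (Fin n)) :
    minimalPeriod (Equiv.Perm.decomposeFin.symm ((0 : Fin (n+1)), e)) (0 : Fin (n+1)) = 1 := by
  rw [minimalPeriod_eq_one_iff_isFixedPt]
  show Equiv.Perm.decomposeFin.symm ((0 : Fin (n+1)), e) 0 = 0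
  simp

lemma minP_decompose_succ (n : ℕ) (q : Fin n) (e : Perm (Fin n)) :
    minimalPeriod (Equiv.Perm.decomposeFin.symm (q.succ, e)) (0 : Fin (n+1))
      = minimalPeriod e q + 1 := by
  set σ := Equiv.Perm.decomposeFin.symm (q.succ, e) with hσ
  set L := minimalPeriod e q with hL
  have hL1 : 0 < L := minP_pos e q
  have happ : ∀ x : Fin n, σ x.succ = if e x = q then 0 else (e x).succ := by
    intro x
    rw [hσ, Equiv.Perm.decomposeFin_symm_apply_succ]
    by_cases h : e x = q
    · simp [h, Equiv.swap_apply_right]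
    · rw [Equiv.swap_apply_of_ne_of_ne (Fin.succ_ne_zero _) (by simpa [Fin.succ_inj] using h)]
      simp [h]
  have hC : ∀ j, j < L → (σ ^ (j + 1)) 0 = ((e ^ j) q).succ := by
    intro j
    induction j with
    | zero =>
      intro _
      simp [hσ]
    | succ j ih =>
      intro hj
      have hjL : j < L := by omega
      have h1 : (σ ^ (j + 1 + 1)) 0 = σ (((e ^ j) q).succ) := by
        rw [pow_succ', Equiv.Perm.mul_apply, ih hjL]
      rw [h1, happ]
      have hne : e ((e ^ j) q) ≠ q := by
        intro h
        have : (e ^ (j + 1)) q = q := by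
          rw [pow_succ', Equiv.Perm.mul_apply]; exact h
        rw [pow_eq_self_iff] at this
        have := Nat.le_of_dvd (by omega) this
        omega
      rw [if_neg hne]
      congr 1
      rw [pow_succ', Equiv.Perm.mul_apply]
  have hA : (σ ^ (L + 1)) 0 = 0 := by
    have h1 : (σ ^ (L + 1)) 0 = σ (((e ^ (L - 1)) q).succ) := by
      conv_lhs => rw [show L + 1 = (L - 1 + 1) + 1 by omega]
      rw [pow_succ', Equiv.Perm.mul_apply, hC (L - 1) (by omega)]
    rw [h1, happ, if_pos]
    have : (e ^ L) q = q := by rw [pow_eq_self_iff]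
    calc e ((e ^ (L - 1)) q) = (e ^ (L - 1 + 1)) q := by
          rw [pow_succ', Equiv.Perm.mul_apply]
      _ = q := by rw [show L - 1 + 1 = L by omega]; exact this
  have hB : ∀ k, 0 < k → k < L + 1 → (σ ^ k) 0 ≠ 0 := by
    intro k hk0 hkL
    rw [show k = (k - 1) + 1 by omega, hC (k - 1) (by omega)]
    exact Fin.succ_ne_zero _
  -- conclude
  have hdvd : minimalPeriod σ 0 ∣ L + 1 := (pow_eq_self_iff σ 0 (L + 1)).mp hA
  have hpos : 0 < minimalPeriod σ 0 := minP_pos σ 0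
  have hle : minimalPeriod σ 0 ≤ L + 1 := Nat.le_of_dvd (by omega) hdvd
  rcases lt_or_eq_of_le hle with h | h
  · exact absurd ((pow_eq_self_iff σ 0 _).mpr dvd_rfl) (hB _ hpos h)
  · exact h


lemma card_minP : ∀ n m : ℕ, ∀ x : Fin n, 1 ≤ m → m ≤ n →
    (univ.filter fun σ : Perm (Fin n) => minimalPeriod σ x = m).card
      = (n - 1).factorial := by
  intro n
  induction n with
  | zero => intro m x _ _; exact x.elim0
  | succ n ih =>
    intro m x hm1 hmn
    rw [card_minP_conj x 0 m, card_filter_equiv (Equiv.Perm.decomposeFin (n := n))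
      (fun σ => minimalPeriod σ 0 = m), card_filter_prod]
    rcases eq_or_lt_of_le hm1 with h1 | h2
    · -- m = 1
      subst h1
      have hterm : ∀ p : Fin (n + 1),
          (univ.filter fun e : Perm (Fin n) =>
            minimalPeriod (Equiv.Perm.decomposeFin.symm (p, e)) 0 = 1).card
          = if p = 0 then n.factorial else 0 := by
        intro p
        induction p using Fin.cases with
        | zero =>
          rw [if_pos rfl]
          have : (univ.filter fun e : Perm (Fin n) =>
              minimalPeriod (Equiv.Perm.decomposeFin.symm ((0 : Fin (n+1)), e)) 0 = 1)
              = univ := by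
            apply Finset.filter_true_of_mem
            intro e _
            exact minP_decompose_zero n e
          rw [this, Finset.card_univ, Fintype.card_perm, Fintype.card_fin]
        | succ q =>
          rw [if_neg (Fin.succ_ne_zero q)]
          rw [Finset.card_eq_zero, Finset.filter_eq_empty_iff]
          intro e _
          rw [minP_decompose_succ n q e]
          have := minP_pos e q
          omega
      rw [Finset.sum_congr rfl fun p _ => hterm p, Finset.sum_ite_eq' univ (0 : Fin (n+1))]
      simp
    · -- m ≥ 2
      have hn1 : 1 ≤ n := by omega
      rw [Fin.sum_univ_succ]
      have h0 : (univ.filter fun e : Perm (Fin n) =>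
          minimalPeriod (Equiv.Perm.decomposeFin.symm ((0 : Fin (n+1)), e)) 0 = m).card
          = 0 := by
        rw [Finset.card_eq_zero, Finset.filter_eq_empty_iff]
        intro e _
        rw [minP_decompose_zero n e]
        omega
      have hq : ∀ q : Fin n, (univ.filter fun e : Perm (Fin n) =>
          minimalPeriod (Equiv.Perm.decomposeFin.symm (q.succ, e)) 0 = m).card
          = (n - 1).factorial := by
        intro q
        have : (univ.filter fun e : Perm (Fin n) =>
            minimalPeriod (Equiv.Perm.decomposeFin.symm (q.succ, e)) 0 = m)
            = univ.filter fun e : Perm (Fin n) => minimalPeriod e q = m - 1 := by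
          apply Finset.filter_congr
          intro e _
          rw [minP_decompose_succ n q e]
          omega
        rw [this, ih (m - 1) q (by omega) (by omega)]
      rw [h0, Finset.sum_congr rfl fun q _ => hq q, Finset.sum_const, Finset.card_univ,
        Fintype.card_fin, zero_add, smul_eq_mul, Nat.succ_sub_one]
      exact Nat.mul_factorial_pred (by omega)

lemma card_long (n m : ℕ) (hm1 : 1 ≤ m) (hmn : m ≤ n) (h2m : n < 2 * m) :
    (univ.filter fun σ : Perm (Fin n) => ∃ x, minimalPeriod σ x = m).card * m
      = n.factorial := by
  have hcard : Fintype.card (Fin n) < 2 * m := by rwa [Fintype.card_fin]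
  have count2 : (univ.filter fun pe : Perm (Fin n) × Fin n =>
      minimalPeriod pe.1 pe.2 = m).card = n * (n - 1).factorial := by
    rw [card_filter_equiv (Equiv.prodComm (Perm (Fin n)) (Fin n))
      (fun pe : Perm (Fin n) × Fin n => minimalPeriod pe.1 pe.2 = m), card_filter_prod]
    have : ∀ x : Fin n, (univ.filter fun σ : Perm (Fin n) =>
        minimalPeriod σ x = m).card = (n - 1).factorial := fun x =>
      card_minP n m x hm1 hmn
    simp only [Equiv.prodComm_symm, Equiv.prodComm_apply, Prod.fst_swap, Prod.snd_swap]
    trans ∑ _x : Fin n, (n - 1).factorial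
    · exact Finset.sum_congr rfl fun x _ => by
        convert this x; ext; rw [Finset.mem_filter]; simp
        exact Finset.mem_filter.trans (and_iff_right (Finset.mem_univ _))
    rw [Finset.sum_const, Finset.card_univ,
      Fintype.card_fin, smul_eq_mul]
  have count1 : (univ.filter fun pe : Perm (Fin n) × Fin n =>
      minimalPeriod pe.1 pe.2 = m).card
      = (univ.filter fun σ : Perm (Fin n) => ∃ x, minimalPeriod σ x = m).card * m := by
    rw [card_filter_prod]
    have hterm : ∀ σ : Perm (Fin n),
        (univ.filter fun x : Fin n => minimalPeriod σ x = m).card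
        = if (∃ x, minimalPeriod σ x = m) then m else 0 := by
      intro σ
      by_cases h : ∃ x, minimalPeriod σ x = m
      · rw [if_pos h]
        obtain ⟨x, hx⟩ := h
        rw [filter_minP_eq_orb hx hcard, card_orb, hx]
      · rw [if_neg h, Finset.card_eq_zero, Finset.filter_eq_empty_iff]
        intro x _ hx
        exact h ⟨x, hx⟩
    rw [Finset.sum_congr rfl fun σ _ => hterm σ, Finset.sum_ite, Finset.sum_const_zero,
      add_zero, Finset.sum_const, smul_eq_mul]
  rw [← count1, count2]
  have := Nat.mul_factorial_pred (show n ≠ 0 by omega)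
  omega


lemma win_iff {n : ℕ} (σ : Perm (Fin n)) (i : Fin n) (h : ℕ) :
    (∃ j < h, (σ.symm ^ j) i = σ i) ↔ minimalPeriod σ i ≤ h := by
  have hmp := minP_pos σ i
  constructor
  · rintro ⟨j, hj, hij⟩
    have hsymm : σ.symm ^ j = (σ ^ j)⁻¹ := by rw [← inv_pow]; rfl
    rw [hsymm] at hij
    have h1 : (σ ^ (j + 1)) i = i := by
      have h2 := congrArg (σ ^ j) hij
      rw [Equiv.Perm.inv_def, Equiv.apply_symm_apply] at h2
      rw [pow_succ, Equiv.Perm.mul_apply, ← h2]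
    have := Nat.le_of_dvd (by omega) ((pow_eq_self_iff σ i (j + 1)).mp h1)
    omega
  · intro hle
    refine ⟨minimalPeriod σ i - 1, by omega, ?_⟩
    have hsymm : σ.symm ^ (minimalPeriod σ i - 1)
        = (σ ^ (minimalPeriod σ i - 1))⁻¹ := by rw [← inv_pow]; rfl
    have key : (σ ^ (minimalPeriod σ i - 1)) (σ i) = i := by
      rw [← Equiv.Perm.mul_apply, ← pow_succ,
        show minimalPeriod σ i - 1 + 1 = minimalPeriod σ i by omega, pow_minP]
    rw [hsymm]
    calc (σ ^ (minimalPeriod σ i - 1))⁻¹ i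
        = (σ ^ (minimalPeriod σ i - 1))⁻¹ ((σ ^ (minimalPeriod σ i - 1)) (σ i)) := by
          rw [key]
      _ = σ i := Equiv.symm_apply_apply _ _

lemma partition_bad (n h : ℕ) (hhn : h + h = n) (hh1 : 1 ≤ h) :
    (univ.filter fun σ : Perm (Fin n) => ¬ ∀ i, minimalPeriod σ i ≤ h)
      = (Finset.Ioc h n).biUnion
          (fun m => univ.filter fun σ : Perm (Fin n) => ∃ x, minimalPeriod σ x = m) := by
  ext σ
  simp only [Finset.mem_filter, Finset.mem_univ, true_and, Finset.mem_biUnion,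
    Finset.mem_Ioc, not_forall, not_le]
  constructor
  · rintro ⟨i, hi⟩
    refine ⟨minimalPeriod σ i, ⟨hi, ?_⟩, i, rfl⟩
    have := minP_le_card σ i
    rwa [Fintype.card_fin] at this
  · rintro ⟨m, ⟨hm1, hm2⟩, x, hx⟩
    exact ⟨x, by omega⟩

lemma disjoint_bad (n h : ℕ) (hhn : h + h = n) {m m' : ℕ}
    (hm : m ∈ Finset.Ioc h n) (hm' : m' ∈ Finset.Ioc h n) (hne : m ≠ m') :
    Disjoint (univ.filter fun σ : Perm (Fin n) => ∃ x, minimalPeriod σ x = m)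
      (univ.filter fun σ : Perm (Fin n) => ∃ x, minimalPeriod σ x = m') := by
  rw [Finset.mem_Ioc] at hm hm'
  rw [Finset.disjoint_left]
  rintro σ h1 h2
  simp only [Finset.mem_filter, Finset.mem_univ, true_and] at h1 h2
  obtain ⟨x, hx⟩ := h1
  obtain ⟨y, hy⟩ := h2
  have hyx : y ∉ orb σ x := fun hmem => hne (by rw [← hx, ← hy, minP_eq_of_mem_orb hmem])
  have hd := orb_disjoint hyx
  have hcard := Finset.card_le_univ (orb σ x ∪ orb σ y)
  rw [Finset.card_union_of_disjoint hd, card_orb, card_orb, hx, hy,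
    Fintype.card_fin] at hcard
  omega

end Locker

/-- The lockers opened by player `i` using the pointer-following strategy:
`a_i 0 = i` and `a_i (j+1) = σ⁻¹ (a_i j)`, i.e. `a_i j = (σ⁻¹)^j i`. -/
def opened {n : ℕ} (σ : Equiv.Perm (Fin n)) (i : Fin n) (j : ℕ) : Fin n :=
  (σ.symm ^ j) i

theorem locker_pointer_following_win_probability (n : ℕ) (hn : 0 < n) (hne : Even n) :
    ((Finset.univ.filter
        (fun σ : Equiv.Perm (Fin n) =>
          ∀ i : Fin n, σ i ∈ (Finset.range (n / 2)).image (opened σ i))).card : ℝ)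
        / (n.factorial : ℝ)
      = 1 - ∑ k ∈ Finset.Icc 1 (n / 2), (1 : ℝ) / ((n / 2 + k : ℕ) : ℝ) := by
  classical
  obtain ⟨t, ht⟩ := hne
  have hhn : n / 2 + n / 2 = n := by omega
  have hh1 : 1 ≤ n / 2 := by omega
  -- Step 1: rewrite the winning condition via minimal periods
  have hfilt : (Finset.univ.filter
      (fun σ : Equiv.Perm (Fin n) =>
        ∀ i : Fin n, σ i ∈ (Finset.range (n / 2)).image (opened σ i)))
      = Finset.univ.filter
        (fun σ : Equiv.Perm (Fin n) => ∀ i, Function.minimalPeriod σ i ≤ (n / 2)) := by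
    apply Finset.filter_congr
    intro σ _
    refine forall_congr' fun i => ?_
    have hmem : (σ i ∈ (Finset.range (n / 2)).image (opened σ i))
        ↔ ∃ j < (n / 2), (σ.symm ^ j) i = σ i := by
      simp only [Finset.mem_image, Finset.mem_range, opened]
    rw [hmem]
    exact Locker.win_iff σ i (n / 2)
  rw [hfilt]
  -- Step 2: the partition of the bad event
  have hsplit := Finset.card_filter_add_card_filter_not (s := Finset.univ)
    (p := fun σ : Equiv.Perm (Fin n) => ∀ i, Function.minimalPeriod σ i ≤ (n / 2))
  have hBad : (Finset.univ.filter
      (fun σ : Equiv.Perm (Fin n) => ¬ ∀ i, Function.minimalPeriod σ i ≤ (n / 2))).card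
      = ∑ m ∈ Finset.Ioc (n / 2) n,
          (Finset.univ.filter
            (fun σ : Equiv.Perm (Fin n) => ∃ x, Function.minimalPeriod σ x = m)).card := by
    rw [Locker.partition_bad n (n / 2) hhn hh1]
    exact Finset.card_biUnion fun m hm m' hm' hne' =>
      Locker.disjoint_bad n (n / 2) hhn hm hm' hne'
  have hcardu : (Finset.univ : Finset (Equiv.Perm (Fin n))).card = n.factorial := by
    rw [Finset.card_univ, Fintype.card_perm, Fintype.card_fin]
  have hBm : ∀ m ∈ Finset.Ioc (n / 2) n,
      (Finset.univ.filter
        (fun σ : Equiv.Perm (Fin n) => ∃ x, Function.minimalPeriod σ x = m)).card * m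
        = n.factorial := by
    intro m hm
    rw [Finset.mem_Ioc] at hm
    exact Locker.card_long n m (by omega) (by omega) (by omega)
  -- Step 3: real arithmetic
  have hfac : (n.factorial : ℝ) ≠ 0 := Nat.cast_ne_zero.mpr (Nat.factorial_ne_zero n)
  have hG : ((Finset.univ.filter
      (fun σ : Equiv.Perm (Fin n) => ∀ i, Function.minimalPeriod σ i ≤ (n / 2))).card : ℝ)
      = (n.factorial : ℝ) - ∑ m ∈ Finset.Ioc (n / 2) n,
          ((Finset.univ.filter
            (fun σ : Equiv.Perm (Fin n) => ∃ x, Function.minimalPeriod σ x = m)).card : ℝ) := by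
    have := hsplit
    rw [hBad, hcardu] at this
    have hcast := congrArg (Nat.cast : ℕ → ℝ) this
    push_cast at hcast
    linarith [hcast]
  rw [hG, sub_div, div_self hfac, Finset.sum_div]
  congr 1
  have hterm : ∀ m ∈ Finset.Ioc (n / 2) n,
      ((Finset.univ.filter
        (fun σ : Equiv.Perm (Fin n) => ∃ x, Function.minimalPeriod σ x = m)).card : ℝ)
        / (n.factorial : ℝ) = 1 / (m : ℝ) := by
    intro m hm
    have hm' := Finset.mem_Ioc.mp hm
    have hmne : (m : ℝ) ≠ 0 := Nat.cast_ne_zero.mpr (by omega)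
    have hc := congrArg (Nat.cast : ℕ → ℝ) (hBm m hm)
    push_cast at hc
    field_simp
    linarith [hc]
  rw [Finset.sum_congr rfl hterm]
  -- reindex
  refine Finset.sum_nbij' (i := fun m => m - (n / 2)) (j := fun k => (n / 2) + k) ?_ ?_ ?_ ?_ ?_
  · intro m hm; rw [Finset.mem_Ioc] at hm; rw [Finset.mem_Icc]; omega
  · intro k hk; rw [Finset.mem_Icc] at hk; rw [Finset.mem_Ioc]; omega
  · intro m hm; rw [Finset.mem_Ioc] at hm; omega
  · intro k hk; rw [Finset.mem_Icc] at hk; omega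
  · intro m hm
    rw [Finset.mem_Ioc] at hm
    congr 1
    rw [show (n / 2) + (m - (n / 2)) = m by omega]
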